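/- (Superstability bound.) For every β > 0 and μ ∈ ℝ there exist constants M > 0 and B > 0 such that: (i) for all x ≥ M and y ≥ M one has μ(y + x) − f₀ᴮ(β,y,x) − (λ₀/2)(y + x)² ≤ −B(y + x); and (ii) every maximizer (x_μ, y_μ) of the variational problem sup_{x ≥ 0, y ≥ 0} { μ(y + x) − f₀ᴮ(β,y,x) − (λ₀/2)(y + x)² } satisfies x_μ < M and y_μ < M. -/

import Mathlib

open MeasureTheory Real Filter Set

set_option maxHeartbeats 1000000

/-- One-particle energy `ε_k = ‖k‖²/2` (units `ħ = m = 1`). -/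
noncomputable def eps (k : EuclideanSpace ℝ (Fin 3)) : ℝ := ‖k‖ ^ 2 / 2

/-- Pressure of the Bogoliubov approximation `p₀ᴮ(β,α,x)`. -/
noncomputable def p0B (lam : EuclideanSpace ℝ (Fin 3) → ℝ) (β α x : ℝ) : ℝ :=
  α * x
    - (β * (2 * π) ^ 3)⁻¹ *
        (∫ k : EuclideanSpace ℝ (Fin 3),
          Real.log (1 - Real.exp (-(β * Real.sqrt ((eps k - α) * (eps k - α + 2 * x * lam k))))))
    + (2 * (2 * π) ^ 3)⁻¹ *
        (∫ k : EuclideanSpace ℝ (Fin 3),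
          (eps k - α + x * lam k - Real.sqrt ((eps k - α) * (eps k - α + 2 * x * lam k))))

/-- Legendre–Fenchel transform `f₀ᴮ(β,y,x) = sup_{α ≤ 0} {α(y+x) − p₀ᴮ(β,α,x)}`. -/
noncomputable def f0B (lam : EuclideanSpace ℝ (Fin 3) → ℝ) (β y x : ℝ) : ℝ :=
  sSup {v : ℝ | ∃ α ≤ (0 : ℝ), v = α * (y + x) - p0B lam β α x}

lemma aux_le_sqrt {a b : ℝ} (ha : 0 ≤ a) (hb : 0 ≤ b) :
    a ≤ Real.sqrt (a * (a + 2 * b)) := by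
  nth_rewrite 1 [← Real.sqrt_mul_self ha]
  exact Real.sqrt_le_sqrt (by nlinarith)

lemma aux_sqrt_le {a b : ℝ} (ha : 0 ≤ a) (hb : 0 ≤ b) :
    Real.sqrt (a * (a + 2 * b)) ≤ a + b := by
  rw [show a + b = Real.sqrt ((a + b) ^ 2) from (Real.sqrt_sq (by linarith)).symm]
  exact Real.sqrt_le_sqrt (by nlinarith)

lemma aux_sub_le_b {a b : ℝ} (ha : 0 ≤ a) (hb : 0 ≤ b) :
    a + b - Real.sqrt (a * (a + 2 * b)) ≤ b := by
  have := aux_le_sqrt ha hb; linarith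

lemma aux_sub_nonneg {a b : ℝ} (ha : 0 ≤ a) (hb : 0 ≤ b) :
    0 ≤ a + b - Real.sqrt (a * (a + 2 * b)) := by
  have := aux_sqrt_le ha hb; linarith

lemma aux_sub_le_div {a b : ℝ} (ha : 0 < a) (hb : 0 ≤ b) :
    a + b - Real.sqrt (a * (a + 2 * b)) ≤ b ^ 2 / a := by
  set s := Real.sqrt (a * (a + 2 * b)) with hs
  have hs0 : 0 ≤ s := Real.sqrt_nonneg _
  have hs2 : s ^ 2 = a * (a + 2 * b) := Real.sq_sqrt (by nlinarith)
  have h1 : 0 ≤ a + b - s := aux_sub_nonneg ha.le hb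
  rw [le_div_iff₀ ha]
  nlinarith [h1]

lemma aux_neg_log_le_frac {s : ℝ} (hs : 0 < s) :
    -Real.log (1 - Real.exp (-s)) ≤ Real.exp (-s) / (1 - Real.exp (-s)) := by
  have hu0 : 0 < Real.exp (-s) := Real.exp_pos _
  have hu1 : Real.exp (-s) < 1 := Real.exp_lt_one_iff.2 (by linarith)
  have h1u : 0 < 1 - Real.exp (-s) := by linarith
  have h := Real.log_le_sub_one_of_pos (inv_pos.2 h1u)
  rw [Real.log_inv] at h
  have : (1 - Real.exp (-s))⁻¹ - 1 = Real.exp (-s) / (1 - Real.exp (-s)) := by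
    field_simp
    ring
  linarith [this ▸ h]

lemma aux_neg_log_le_inv {s : ℝ} (hs : 0 < s) :
    -Real.log (1 - Real.exp (-s)) ≤ s⁻¹ := by
  have hu0 : 0 < Real.exp (-s) := Real.exp_pos _
  have h1u : 0 < 1 - Real.exp (-s) := by
    linarith [Real.exp_lt_one_iff.2 (show -s < 0 by linarith)]
  refine (aux_neg_log_le_frac hs).trans ?_
  have hkey : s * Real.exp (-s) ≤ 1 - Real.exp (-s) := by
    have h := Real.add_one_le_exp s
    have h2 : (s + 1) * Real.exp (-s) ≤ Real.exp s * Real.exp (-s) := by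
      exact mul_le_mul_of_nonneg_right h hu0.le
    rw [← Real.exp_add] at h2
    simp only [add_neg_cancel, Real.exp_zero] at h2
    nlinarith
  calc Real.exp (-s) / (1 - Real.exp (-s)) ≤ Real.exp (-s) / (s * Real.exp (-s)) :=
        div_le_div_of_nonneg_left hu0.le (by positivity) hkey
      _ = s⁻¹ := by field_simp [mul_comm]
  
lemma aux_neg_log_le_exp {s : ℝ} (hs : 1 ≤ s) :
    -Real.log (1 - Real.exp (-s)) ≤ 2 * Real.exp (-s) := by
  have hu0 : 0 < Real.exp (-s) := Real.exp_pos _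
  have h1u : 0 < 1 - Real.exp (-s) := by
    linarith [Real.exp_lt_one_iff.2 (show -s < 0 by linarith)]
  refine (aux_neg_log_le_frac (by linarith)).trans ?_
  have hhalf : Real.exp (-s) ≤ 2⁻¹ := by
    have h1 : Real.exp (-s) ≤ Real.exp (-1) := Real.exp_le_exp.2 (by linarith)
    have h2 : (2 : ℝ) ≤ Real.exp 1 := by linarith [Real.add_one_le_exp 1]
    have h3 : Real.exp (-1) ≤ 2⁻¹ := by
      rw [Real.exp_neg, inv_le_inv₀ (Real.exp_pos 1) (by norm_num)]
      exact h2
    linarith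
  calc Real.exp (-s) / (1 - Real.exp (-s)) ≤ Real.exp (-s) / 2⁻¹ :=
        div_le_div_of_nonneg_left hu0.le (by norm_num) (by linarith)
      _ = 2 * Real.exp (-s) := by ring

noncomputable def wfun (r t : ℝ) : ℝ :=
  Set.indicator (Icc (-r) r) (fun t => |t| ^ (-(2/3) : ℝ)) t

lemma wfun_nonneg (r t : ℝ) : 0 ≤ wfun r t :=
  Set.indicator_nonneg (fun t _ => Real.rpow_nonneg (abs_nonneg t) _) t

lemma integrable_wfun {r : ℝ} (hr : 0 < r) : Integrable (wfun r) := by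
  have h1 : IntervalIntegrable (fun t : ℝ => |t| ^ (-(2/3) : ℝ)) volume 0 r := by
    have h0 := intervalIntegral.intervalIntegrable_rpow' (a := 0) (b := r)
      (r := -(2/3)) (by norm_num)
    rw [intervalIntegrable_iff_integrableOn_Ioc_of_le hr.le] at h0 ⊢
    exact h0.congr_fun (fun t ht => by rw [abs_of_pos ht.1]) measurableSet_Ioc
  have h2 : IntervalIntegrable (fun t : ℝ => |t| ^ (-(2/3) : ℝ)) volume (-r) 0 := by
    have h3 := (IntervalIntegrable.iff_comp_neg (a := 0) (b := r)).1 h1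
    simp only [abs_neg, neg_zero] at h3
    exact h3.symm
  have h3 := h2.trans h1
  rw [intervalIntegrable_iff_integrableOn_Ioc_of_le (by linarith)] at h3
  have h4 : IntegrableOn (fun t : ℝ => |t| ^ (-(2/3) : ℝ)) (Icc (-r) r) :=
    (integrableOn_Icc_iff_integrableOn_Ioc).2 h3
  exact h4.integrable_indicator measurableSet_Icc

lemma integrable_prod_comp (g : ℝ → ℝ) (hg : Integrable g) :
    Integrable (fun k : EuclideanSpace ℝ (Fin 3) => ∏ i, g (k i)) := by
  have h1 : Integrable (fun x : Fin 3 → ℝ => ∏ i, g (x i)) :=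
    Integrable.fintype_prod (fun _ => hg)
  have h2 := MeasurePreserving.integrable_comp_emb
    (g := fun x : Fin 3 → ℝ => ∏ i, g (x i))
    (EuclideanSpace.volume_preserving_symm_measurableEquiv_toLp (Fin 3))
    (MeasurableEquiv.toLp 2 (Fin 3 → ℝ)).symm.measurableEmbedding
  exact h2.2 h1

lemma ae_coords_ne_zero :
    ∀ᵐ k : EuclideanSpace ℝ (Fin 3), ∀ i, k i ≠ 0 := by
  rw [ae_all_iff]
  intro i
  have hS : volume {k : EuclideanSpace ℝ (Fin 3) | k i = 0} = 0 := by
    set S : Submodule ℝ (EuclideanSpace ℝ (Fin 3)) :=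
      { carrier := {k | k i = 0}
        add_mem' := by intro a b ha hb; simp only [Set.mem_setOf_eq] at *
                       simp [PiLp.add_apply, ha, hb]
        zero_mem' := by simp [Set.mem_setOf_eq]
        smul_mem' := by intro c a ha; simp only [Set.mem_setOf_eq] at *
                        simp [PiLp.smul_apply, ha] } with hSdef
    have hne : S ≠ ⊤ := by
      intro htop
      have : EuclideanSpace.single i (1:ℝ) ∈ S := htop ▸ Submodule.mem_top
      simp only [hSdef, Submodule.mem_mk, AddSubmonoid.mem_mk, AddSubsemigroup.mem_mk,
        Set.mem_setOf_eq, EuclideanSpace.single_apply, if_pos rfl] at this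
      have h' : (EuclideanSpace.single i (1:ℝ)) i = 0 := this
      simp at h'
    exact Measure.addHaar_submodule volume S hne
  rw [ae_iff]
  convert hS using 2
  simp [not_not]

lemma norm_sq_eq_sum (k : EuclideanSpace ℝ (Fin 3)) : ‖k‖ ^ 2 = ∑ i, (k i) ^ 2 := by
  rw [EuclideanSpace.norm_eq]
  rw [Real.sq_sqrt (by positivity)]
  simp [sq_abs]

lemma abs_coord_le_norm (k : EuclideanSpace ℝ (Fin 3)) (i : Fin 3) : |k i| ≤ ‖k‖ := by
  have h1 : |k i| = Real.sqrt ((k i) ^ 2) := (Real.sqrt_sq_eq_abs _).symm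
  rw [h1, EuclideanSpace.norm_eq]
  apply Real.sqrt_le_sqrt
  have := Finset.single_le_sum (f := fun j => ‖k j‖ ^ 2)
    (fun j _ => by positivity) (Finset.mem_univ i)
  simpa [sq_abs] using this

lemma amgm3 (k : EuclideanSpace ℝ (Fin 3)) :
    ∏ i, |k i| ^ ((2 : ℝ)/3) ≤ ‖k‖ ^ 2 := by
  have h := Real.geom_mean_le_arith_mean3_weighted
    (w₁ := 1/3) (w₂ := 1/3) (w₃ := 1/3)
    (p₁ := (k 0) ^ 2) (p₂ := (k 1) ^ 2) (p₃ := (k 2) ^ 2)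
    (by norm_num) (by norm_num) (by norm_num)
    (sq_nonneg _) (sq_nonneg _) (sq_nonneg _) (by norm_num)
  have habs : ∀ i : Fin 3, ((k i) ^ 2) ^ ((1:ℝ)/3) = |k i| ^ ((2:ℝ)/3) := by
    intro i
    rw [← sq_abs]
    rw [← Real.rpow_natCast |k i| 2, ← Real.rpow_mul (abs_nonneg _)]
    norm_num
  rw [Fin.prod_univ_three]
  rw [norm_sq_eq_sum, Fin.sum_univ_three]
  calc |k 0| ^ ((2:ℝ)/3) * |k 1| ^ ((2:ℝ)/3) * |k 2| ^ ((2:ℝ)/3)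
      = ((k 0) ^ 2) ^ ((1:ℝ)/3) * ((k 1) ^ 2) ^ ((1:ℝ)/3) * ((k 2) ^ 2) ^ ((1:ℝ)/3) := by
        rw [habs 0, habs 1, habs 2]
    _ ≤ 1/3 * (k 0)^2 + 1/3 * (k 1)^2 + 1/3 * (k 2)^2 := h
    _ ≤ (k 0)^2 + (k 1)^2 + (k 2)^2 := by nlinarith [sq_nonneg (k 0), sq_nonneg (k 1), sq_nonneg (k 2)]

lemma eps_nonneg (k : EuclideanSpace ℝ (Fin 3)) : 0 ≤ eps k := by unfold eps; positivity

lemma eps_pos {k : EuclideanSpace ℝ (Fin 3)} (hk : k ≠ 0) : 0 < eps k := by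
  unfold eps
  have : 0 < ‖k‖ := norm_pos_iff.2 hk
  positivity

lemma p0B_zero_bound (lam : EuclideanSpace ℝ (Fin 3) → ℝ)
    (hlam0 : 0 < lam 0) (hlam_bd : ∀ k, 0 ≤ lam k ∧ lam k ≤ lam 0)
    (hlamL2 : MemLp lam 2 volume) (β : ℝ) (hβ : 0 < β) :
    ∃ C₁, 0 ≤ C₁ ∧ ∃ C₂, 0 ≤ C₂ ∧ ∀ x, 0 ≤ x →
      p0B lam β 0 x ≤ C₁ + C₂ * x + lam 0 / 4 * x ^ 2 := by
  have hπ := Real.pi_gt_three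
  -- the radius for the small-momentum region of the log term
  set r : ℝ := Real.sqrt (2/β) with hrdef
  clear_value r
  have hr : 0 < r := by rw [hrdef]; exact Real.sqrt_pos.2 (by positivity)
  -- dominating function for the log term
  set hdom : EuclideanSpace ℝ (Fin 3) → ℝ := fun k =>
    (2/β) * ∏ i, wfun r (k i) + 2 * ∏ i, Real.exp (-(β/2) * (k i)^2) with hdomdef
  have hdom_int : Integrable hdom := by
    apply Integrable.add
    · exact (integrable_prod_comp _ (integrable_wfun hr)).const_mul _
    · exact (integrable_prod_comp _ (integrable_exp_neg_mul_sq (by positivity))).const_mul _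
  have hdom_nonneg : ∀ k, 0 ≤ hdom k := by
    intro k
    apply add_nonneg
    · apply mul_nonneg (by positivity)
      exact Finset.prod_nonneg fun i _ => wfun_nonneg r (k i)
    · apply mul_nonneg (by positivity)
      exact Finset.prod_nonneg fun i _ => (Real.exp_pos _).le
  set Cg : ℝ := ∫ k, hdom k with hCgdef
  have hCg0 : 0 ≤ Cg := integral_nonneg hdom_nonneg
  clear_value Cg
  -- the L² mass of lam
  set L : ℝ := ∫ k, (lam k)^2 with hLdef
  have hL0 : 0 ≤ L := integral_nonneg fun k => sq_nonneg _
  clear_value L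
  have hLint : Integrable (fun k : EuclideanSpace ℝ (Fin 3) => (lam k)^2) :=
    hlamL2.integrable_sq
  -- the radius for the large-momentum region of the second term
  set R : ℝ := Real.sqrt (8 * L / lam 0) + 1 with hRdef
  clear_value R
  have hR1 : 1 ≤ R := by
    rw [hRdef]; linarith [Real.sqrt_nonneg (8 * L / lam 0)]
  have hR0 : 0 < R := by linarith
  have hRsq : 8 * L / lam 0 ≤ R ^ 2 := by
    rw [hRdef]
    have h1 := Real.sq_sqrt (show (0:ℝ) ≤ 8 * L / lam 0 by positivity)
    nlinarith [Real.sqrt_nonneg (8 * L / lam 0)]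
  have hkeyR : 2 * L / R ^ 2 ≤ lam 0 / 4 := by
    rw [div_le_div_iff₀ (pow_pos hR0 2) (by norm_num)]
    have h2 : 8 * L ≤ lam 0 * R ^ 2 := by
      rw [div_le_iff₀ hlam0] at hRsq; linarith
    linarith
  set V : ℝ := (volume (Metric.closedBall (0 : EuclideanSpace ℝ (Fin 3)) R)).toReal with hVdef
  have hV0 : 0 ≤ V := ENNReal.toReal_nonneg
  clear_value V
  set c₁ : ℝ := (β * (2 * π) ^ 3)⁻¹ with hc1def
  set c₂ : ℝ := (2 * (2 * π) ^ 3)⁻¹ with hc2def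
  have hc₁ : 0 < c₁ := by rw [hc1def]; positivity
  have hc₂ : 0 < c₂ := by rw [hc2def]; positivity
  clear_value c₁ c₂
  have hc₂1 : c₂ ≤ 1 := by
    rw [hc2def, inv_le_one_iff₀]
    right
    have h6 : (6:ℝ) ≤ 2 * π := by linarith
    nlinarith [pow_le_pow_left₀ (by norm_num : (0:ℝ) ≤ 6) h6 3]
  refine ⟨c₁ * Cg, mul_nonneg hc₁.le hCg0,
    c₂ * (lam 0 * V), mul_nonneg hc₂.le (mul_nonneg hlam0.le hV0), ?_⟩
  intro x hx
  -- the two integrals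
  set I₁ : ℝ := ∫ k : EuclideanSpace ℝ (Fin 3),
    Real.log (1 - Real.exp (-(β * Real.sqrt (eps k * (eps k + 2 * x * lam k))))) with hI1def
  set I₂ : ℝ := ∫ k : EuclideanSpace ℝ (Fin 3),
    (eps k + x * lam k - Real.sqrt (eps k * (eps k + 2 * x * lam k))) with hI2def
  have hform : p0B lam β 0 x = -(c₁ * I₁) + c₂ * I₂ := by
    simp only [p0B, sub_zero, zero_mul, zero_sub, hI1def, hI2def, hc1def, hc2def]
  -- Step B : the log integral
  have hB : -I₁ ≤ Cg := by
    have hmain : ∫ k : EuclideanSpace ℝ (Fin 3),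
        -Real.log (1 - Real.exp (-(β * Real.sqrt (eps k * (eps k + 2 * x * lam k)))))
        ≤ ∫ k, hdom k := by
      apply integral_mono_of_nonneg _ hdom_int
      · -- pointwise domination, a.e.
        filter_upwards [ae_coords_ne_zero] with k hk
        have hknz : k ≠ 0 := by
          intro h
          exact hk 0 (by rw [h]; rfl)
        have heps : 0 < eps k := eps_pos hknz
        have hb : 0 ≤ x * lam k := mul_nonneg hx (hlam_bd k).1
        have hassoc : eps k + 2 * x * lam k = eps k + 2 * (x * lam k) := by ring
        set s : ℝ := β * eps k with hsdef
        have hs0 : 0 < s := by positivity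
        set t : ℝ := β * Real.sqrt (eps k * (eps k + 2 * x * lam k)) with htdef
        have hst : s ≤ t := by
          rw [hsdef, htdef, hassoc]
          exact mul_le_mul_of_nonneg_left (aux_le_sqrt heps.le hb) hβ.le
        have ht0 : 0 < t := lt_of_lt_of_le hs0 hst
        have hmono : -Real.log (1 - Real.exp (-t)) ≤ -Real.log (1 - Real.exp (-s)) := by
          apply neg_le_neg
          apply Real.log_le_log
          · linarith [Real.exp_lt_one_iff.2 (show -s < 0 by linarith)]
          · have := Real.exp_le_exp.2 (show -t ≤ -s by linarith)
            linarith
        have hnorm2 : ‖k‖ ^ 2 = 2 * eps k := by unfold eps; ring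
        by_cases hs1 : s ≤ 1
        · -- small momenta : use the 1/s bound and AM-GM
          have hkr : ‖k‖ ≤ r := by
            rw [hrdef]
            rw [show ‖k‖ = Real.sqrt (‖k‖^2) from (Real.sqrt_sq (norm_nonneg k)).symm]
            apply Real.sqrt_le_sqrt
            rw [hnorm2]
            rw [hsdef] at hs1
            rw [le_div_iff₀ hβ]
            nlinarith
          have hwi : ∀ i, wfun r (k i) = |k i| ^ (-(2/3) : ℝ) := by
            intro i
            apply Set.indicator_of_mem
            rw [Set.mem_Icc]
            constructor <;> [linarith [abs_le.1 ((abs_coord_le_norm k i).trans hkr) |>.1];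
              linarith [abs_le.1 ((abs_coord_le_norm k i).trans hkr) |>.2]]
          have hProdPos : 0 < ∏ i, |k i| ^ ((2:ℝ)/3) :=
            Finset.prod_pos fun i _ => Real.rpow_pos_of_pos (abs_pos.2 (hk i)) _
          have hinv : (‖k‖^2)⁻¹ ≤ ∏ i, |k i| ^ (-(2/3) : ℝ) := by
            have h1 : (‖k‖^2)⁻¹ ≤ (∏ i, |k i| ^ ((2:ℝ)/3))⁻¹ := by
              apply inv_anti₀ hProdPos (amgm3 k)
            refine h1.trans_eq ?_
            rw [← Finset.prod_inv_distrib]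
            apply Finset.prod_congr rfl
            intro i _
            rw [← Real.rpow_neg (abs_nonneg _)]
          calc -Real.log (1 - Real.exp (-t)) ≤ -Real.log (1 - Real.exp (-s)) := hmono
            _ ≤ s⁻¹ := aux_neg_log_le_inv hs0
            _ = (2/β) * (‖k‖^2)⁻¹ := by
                rw [hsdef, hnorm2]
                field_simp
            _ ≤ (2/β) * ∏ i, |k i| ^ (-(2/3) : ℝ) := by
                apply mul_le_mul_of_nonneg_left hinv (by positivity)
            _ ≤ hdom k := by
                rw [hdomdef]
                simp only
                have : ∏ i, wfun r (k i) = ∏ i, |k i| ^ (-(2/3) : ℝ) :=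
                  Finset.prod_congr rfl fun i _ => hwi i
                rw [this]
                have hexp : 0 ≤ 2 * ∏ i, Real.exp (-(β/2) * (k i)^2) :=
                  mul_nonneg (by norm_num) (Finset.prod_nonneg fun i _ => (Real.exp_pos _).le)
                linarith
        · -- large momenta : exponential decay
          push_neg at hs1
          have hexpprod : Real.exp (-s) = ∏ i, Real.exp (-(β/2) * (k i)^2) := by
            rw [← Real.exp_sum]
            congr 1
            rw [hsdef]
            have : eps k = (∑ i, (k i)^2) / 2 := by
              unfold eps; rw [norm_sq_eq_sum]
            rw [this]
            rw [Finset.sum_congr rfl (fun i _ => show -(β/2) * (k i)^2 = (-(β/2)) * (k i)^2 from rfl)]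
            rw [← Finset.mul_sum]
            ring
          calc -Real.log (1 - Real.exp (-t)) ≤ -Real.log (1 - Real.exp (-s)) := hmono
            _ ≤ 2 * Real.exp (-s) := aux_neg_log_le_exp hs1.le
            _ = 2 * ∏ i, Real.exp (-(β/2) * (k i)^2) := by rw [hexpprod]
            _ ≤ hdom k := by
                rw [hdomdef]
                simp only
                have hw : 0 ≤ (2/β) * ∏ i, wfun r (k i) :=
                  mul_nonneg (by positivity) (Finset.prod_nonneg fun i _ => wfun_nonneg r (k i))
                linarith
      · -- nonnegativity of -log(1-exp(-t))
        apply ae_of_all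
        intro k
        simp only [Pi.zero_apply, neg_nonneg]
        apply Real.log_nonpos
        · have : Real.exp (-(β * Real.sqrt (eps k * (eps k + 2 * x * lam k)))) ≤ 1 := by
            apply Real.exp_le_one_iff.2
            simp only [neg_nonpos]
            positivity
          linarith
        · linarith [Real.exp_pos (-(β * Real.sqrt (eps k * (eps k + 2 * x * lam k))))]
    rw [integral_neg] at hmain
    rw [hI1def, hCgdef]
    exact hmain
  -- Step C : the second integral
  have hC : I₂ ≤ x * lam 0 * V + 2 * x^2 / R^2 * L := by
    set g2 : EuclideanSpace ℝ (Fin 3) → ℝ := fun k =>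
      Set.indicator (Metric.closedBall (0 : EuclideanSpace ℝ (Fin 3)) R) (fun _ => x * lam 0) k
        + 2 * x^2 / R^2 * (lam k)^2 with hg2def
    have hg2int : Integrable g2 := by
      apply Integrable.add
      · exact (integrableOn_const measure_closedBall_lt_top.ne).integrable_indicator
          measurableSet_closedBall
      · exact hLint.const_mul _
    have hg2val : ∫ k, g2 k = x * lam 0 * V + 2 * x^2 / R^2 * L := by
      rw [hg2def]
      simp only
      rw [integral_add ((integrableOn_const measure_closedBall_lt_top.ne).integrable_indicator
          measurableSet_closedBall) (hLint.const_mul _)]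
      rw [integral_indicator_const _ measurableSet_closedBall, integral_const_mul]
      rw [hVdef, hLdef]
      simp only [smul_eq_mul, measureReal_def]
      ring
    have hmono : I₂ ≤ ∫ k, g2 k := by
      rw [hI2def]
      apply integral_mono_of_nonneg _ hg2int
      · filter_upwards [ae_coords_ne_zero] with k hk
        have hknz : k ≠ 0 := by
          intro h; exact hk 0 (by rw [h]; rfl)
        have heps : 0 < eps k := eps_pos hknz
        have hb : 0 ≤ x * lam k := mul_nonneg hx (hlam_bd k).1
        have hassoc : eps k + 2 * x * lam k = eps k + 2 * (x * lam k) := by ring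
        by_cases hkR : ‖k‖ ≤ R
        · have hmem : k ∈ Metric.closedBall (0 : EuclideanSpace ℝ (Fin 3)) R := by
            rw [Metric.mem_closedBall, dist_zero_right]; exact hkR
          rw [hg2def]
          simp only [Set.indicator_of_mem hmem]
          have h1 : eps k + x * lam k - Real.sqrt (eps k * (eps k + 2 * x * lam k))
              ≤ x * lam k := by
            rw [hassoc]; exact aux_sub_le_b heps.le hb
          have h2 : x * lam k ≤ x * lam 0 := mul_le_mul_of_nonneg_left (hlam_bd k).2 hx
          have h3 : 0 ≤ 2 * x^2 / R^2 * (lam k)^2 := by positivity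
          linarith
        · push_neg at hkR
          have hnmem : k ∉ Metric.closedBall (0 : EuclideanSpace ℝ (Fin 3)) R := by
            rw [Metric.mem_closedBall, dist_zero_right]; linarith
          rw [hg2def]
          simp only [Set.indicator_of_notMem hnmem, zero_add]
          have h1 : eps k + x * lam k - Real.sqrt (eps k * (eps k + 2 * x * lam k))
              ≤ (x * lam k)^2 / eps k := by
            rw [hassoc]; exact aux_sub_le_div heps hb
          have h2 : (x * lam k)^2 / eps k ≤ (x * lam k)^2 / (R^2/2) := by
            apply div_le_div_of_nonneg_left (sq_nonneg _)
              (div_pos (pow_pos hR0 2) (by norm_num))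
            have hpow : R^2 ≤ ‖k‖^2 := by
              nlinarith [mul_lt_mul_of_pos_left hkR hR0,
                mul_le_mul_of_nonneg_right hkR.le (norm_nonneg k)]
            unfold eps
            linarith
          have h3 : (x * lam k)^2 / (R^2/2) = 2 * x^2 / R^2 * (lam k)^2 := by
            field_simp
          linarith
      · apply ae_of_all
        intro k
        simp only [Pi.zero_apply]
        have hb : 0 ≤ x * lam k := mul_nonneg hx (hlam_bd k).1
        have hassoc : eps k + 2 * x * lam k = eps k + 2 * (x * lam k) := by ring
        rw [hassoc]
        exact aux_sub_nonneg (eps_nonneg k) hb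
    linarith [hg2val ▸ hmono]
  -- combine
  rw [hform]
  have hB' : -(c₁ * I₁) ≤ c₁ * Cg := by nlinarith [mul_le_mul_of_nonneg_left hB hc₁.le]
  have hC' : c₂ * I₂ ≤ c₂ * (x * lam 0 * V + 2 * x^2 / R^2 * L) :=
    mul_le_mul_of_nonneg_left hC hc₂.le
  have hquad : c₂ * (2 * x^2 / R^2 * L) ≤ lam 0 / 4 * x^2 := by
    have h1 : 2 * x^2 / R^2 * L = (2 * L / R^2) * x^2 := by ring
    rw [h1]
    calc c₂ * ((2 * L / R^2) * x^2) ≤ 1 * ((lam 0 / 4) * x^2) := by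
          apply mul_le_mul hc₂1
          · exact mul_le_mul_of_nonneg_right hkeyR (sq_nonneg x)
          · positivity
          · norm_num
      _ = lam 0 / 4 * x^2 := by ring
    
  nlinarith [hB', hC', hquad]

lemma f0B_lower (lam : EuclideanSpace ℝ (Fin 3) → ℝ) (β y x : ℝ) :
    min 0 (-(p0B lam β 0 x)) ≤ f0B lam β y x := by
  unfold f0B
  by_cases hbdd : BddAbove {v : ℝ | ∃ α ≤ (0:ℝ), v = α * (y + x) - p0B lam β α x}
  · refine le_trans (min_le_right _ _) (le_csSup hbdd ?_)
    exact ⟨0, le_rfl, by ring⟩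
  · rw [Real.sSup_of_not_bddAbove hbdd]
    exact min_le_left _ _

lemma p0B_at_zero_nonneg (lam : EuclideanSpace ℝ (Fin 3) → ℝ) (β : ℝ) (hβ : 0 < β)
    {α : ℝ} (hα : α ≤ 0) : 0 ≤ p0B lam β α 0 := by
  have hπ := Real.pi_gt_three
  have hI2 : (∫ k : EuclideanSpace ℝ (Fin 3),
      (eps k - α + 0 * lam k - Real.sqrt ((eps k - α) * (eps k - α + 2 * 0 * lam k)))) = 0 := by
    have heq : (fun k : EuclideanSpace ℝ (Fin 3) =>
        eps k - α + 0 * lam k - Real.sqrt ((eps k - α) * (eps k - α + 2 * 0 * lam k)))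
        = fun _ => (0:ℝ) := by
      funext k
      have h0 : 0 ≤ eps k - α := by linarith [eps_nonneg k]
      simp only [zero_mul, mul_zero, add_zero]
      rw [Real.sqrt_mul_self h0]
      ring
    rw [heq, integral_zero]
  have hI1 : (∫ k : EuclideanSpace ℝ (Fin 3),
      Real.log (1 - Real.exp (-(β * Real.sqrt ((eps k - α) * (eps k - α + 2 * 0 * lam k)))))) ≤ 0 := by
    apply integral_nonpos
    intro k
    simp only [Pi.zero_apply]
    apply Real.log_nonpos
    · have h1 : Real.exp (-(β * Real.sqrt ((eps k - α) * (eps k - α + 2 * 0 * lam k)))) ≤ 1 := by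
        apply Real.exp_le_one_iff.2
        simp only [neg_nonpos]
        positivity
      linarith
    · linarith [Real.exp_pos (-(β * Real.sqrt ((eps k - α) * (eps k - α + 2 * 0 * lam k))))]
  unfold p0B
  rw [hI2]
  have hc : 0 < (β * (2*π)^3)⁻¹ := by positivity
  nlinarith [mul_nonneg hc.le (neg_nonneg.2 hI1)]

lemma f0B_nonpos_at_zero (lam : EuclideanSpace ℝ (Fin 3) → ℝ) (β : ℝ) (hβ : 0 < β) :
    f0B lam β 0 0 ≤ 0 := by
  apply Real.sSup_nonpos
  rintro v ⟨α, hα, rfl⟩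
  have h := p0B_at_zero_nonneg lam β hβ hα
  nlinarith

/-- Superstability bound: there are `M, B > 0` such that the functional
`(x,y) ↦ μ(y+x) − f₀ᴮ(β,y,x) − (λ₀/2)(y+x)²` (with `λ₀ = λ(0)`) is `≤ −B(y+x)` for
`x, y ≥ M`, and every maximizer lies in `[0,M) × [0,M)`. -/
theorem stmt_7 (lam : EuclideanSpace ℝ (Fin 3) → ℝ)
    (hlam_cont : Continuous lam) (hlam0 : 0 < lam 0)
    (hlam_bd : ∀ k, 0 ≤ lam k ∧ lam k ≤ lam 0) (hlamL2 : MemLp lam 2 volume)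
    (β μ : ℝ) (hβ : 0 < β) :
    ∃ M > (0 : ℝ), ∃ B > (0 : ℝ),
      (∀ x ≥ M, ∀ y ≥ M,
        μ * (y + x) - f0B lam β y x - lam 0 / 2 * (y + x) ^ 2 ≤ -B * (y + x)) ∧
      (∀ xm ≥ (0 : ℝ), ∀ ym ≥ (0 : ℝ),
        (∀ x ≥ (0 : ℝ), ∀ y ≥ (0 : ℝ),
          μ * (y + x) - f0B lam β y x - lam 0 / 2 * (y + x) ^ 2
            ≤ μ * (ym + xm) - f0B lam β ym xm - lam 0 / 2 * (ym + xm) ^ 2) →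
        xm < M ∧ ym < M) := by
  obtain ⟨C₁, hC₁, C₂, hC₂, hbound⟩ := p0B_zero_bound lam hlam0 hlam_bd hlamL2 β hβ
  set K : ℝ := C₁ + |μ| + C₂ + 1 with hKdef
  have hK : 1 ≤ K := by
    have := abs_nonneg μ; linarith
  set M : ℝ := max 1 (4*K/lam 0) with hMdef
  have hM1 : 1 ≤ M := le_max_left _ _
  have hM0 : 0 < M := by linarith
  have hMK : 4*K/lam 0 ≤ M := le_max_right _ _
  have h4K : 4*K ≤ M * lam 0 := (div_le_iff₀ hlam0).1 hMK
  -- the key estimate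
  have hG : ∀ x ≥ (0:ℝ), ∀ y ≥ (0:ℝ), M ≤ y + x →
      μ * (y + x) - f0B lam β y x - lam 0 / 2 * (y + x) ^ 2 ≤ -(y + x) := by
    intro x hx y hy hs
    have hf := f0B_lower lam β y x
    have hp := hbound x hx
    have hpos : 0 ≤ C₁ + C₂ * x + lam 0 / 4 * x ^ 2 :=
      add_nonneg (add_nonneg hC₁ (mul_nonneg hC₂ hx))
        (mul_nonneg (by linarith) (sq_nonneg x))
    have hfneg : -f0B lam β y x ≤ C₁ + C₂ * x + lam 0 / 4 * x ^ 2 := by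
      have h2 : -(C₁ + C₂ * x + lam 0 / 4 * x ^ 2) ≤ min 0 (-(p0B lam β 0 x)) := by
        apply le_min
        · linarith
        · exact neg_le_neg hp
      linarith
    have hxs : x ≤ y + x := by linarith
    have hs1 : (1:ℝ) ≤ y + x := le_trans hM1 hs
    have hμs : μ * (y + x) ≤ |μ| * (y + x) :=
      mul_le_mul_of_nonneg_right (le_abs_self μ) (by linarith)
    have hx2 : x ^ 2 ≤ (y + x) ^ 2 := by nlinarith
    have hMl : M * lam 0 ≤ (y + x) * lam 0 :=
      mul_le_mul_of_nonneg_right hs hlam0.le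
    have hKs : 4 * K * (y + x) ≤ (y + x) * lam 0 * (y + x) := by
      apply mul_le_mul_of_nonneg_right _ (by linarith)
      linarith
    nlinarith [mul_nonneg hC₂ (sub_nonneg.2 hxs), mul_nonneg hC₁ (sub_nonneg.2 hs1),
      mul_nonneg (show (0:ℝ) ≤ lam 0 / 4 by linarith) (sub_nonneg.2 hx2)]
  refine ⟨M, hM0, 1, one_pos, ?_, ?_⟩
  · intro x hx y hy
    have h := hG x (by linarith) y (by linarith) (by linarith)
    linarith [h]
  · intro xm hxm ym hym hmax
    by_contra hcon
    rw [not_and_or, not_lt, not_lt] at hcon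
    have hsum : M ≤ ym + xm := by
      rcases hcon with h | h <;> linarith
    have h1 := hG xm hxm ym hym hsum
    have h2 := hmax 0 le_rfl 0 le_rfl
    have h3 : (0:ℝ) ≤ μ * (0 + 0) - f0B lam β 0 0 - lam 0 / 2 * (0 + 0) ^ 2 := by
      have := f0B_nonpos_at_zero lam β hβ
      simp only [add_zero, mul_zero]
      norm_num
      linarith
    linarith
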